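/- For all real x > 1, the Chebyshev theta function satisfies θ(x) < 2x, where θ(x) = ∑_{p ≤ x} ln p. -/

import Mathlib

/-- Chebyshev's first function `θ(x) = ∑_{p ≤ x} ln p`. -/
noncomputable def chebyshevTheta (x : ℝ) : ℝ :=
  ∑ p ∈ (Finset.range (⌊x⌋₊ + 1)).filter Nat.Prime, Real.log p

theorem chebyshevTheta_lt_two_mul (x : ℝ) (hx : 1 < x) :
    chebyshevTheta x < 2 * x := by
  set n := ⌊x⌋₊ with hn
  have hn1 : 1 ≤ n := Nat.le_floor (by exact_mod_cast hx.le)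
  have hx0 : (0:ℝ) < x := lt_trans one_pos hx
  have h1 : chebyshevTheta x = Real.log (primorial n) := by
    unfold chebyshevTheta primorial
    rw [Nat.cast_prod, Real.log_prod]
    intro p hp
    have := (Finset.mem_filter.mp hp).2.pos
    positivity
  have hpos : (0:ℝ) < (primorial n : ℝ) := by
    exact_mod_cast Nat.pos_of_ne_zero (primorial_pos n).ne'
  have h2 : Real.log (primorial n) ≤ n * Real.log 4 := by
    calc Real.log (primorial n) ≤ Real.log ((4:ℝ)^n) := by
          apply Real.log_le_log hpos
          exact_mod_cast primorial_le_4_pow n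
      _ = n * Real.log 4 := by rw [Real.log_pow]
  have hlog4 : Real.log 4 < 2 := by
    rw [Real.log_lt_iff_lt_exp (by norm_num)]
    have h := Real.exp_one_gt_d9
    have : Real.exp 2 = Real.exp 1 * Real.exp 1 := by
      rw [← Real.exp_add]; norm_num
    nlinarith
  have hnx : (n:ℝ) ≤ x := Nat.floor_le hx0.le
  have hn1' : (1:ℝ) ≤ (n:ℝ) := by exact_mod_cast hn1
  calc chebyshevTheta x ≤ n * Real.log 4 := h1 ▸ h2
    _ < n * 2 := by nlinarith
    _ ≤ 2 * x := by nlinarith
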